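/- Let T > 0, let f : ℝ^N × [0,T] → ℝ^N be continuous and continuously differentiable in its first argument, and let u : [0,T] → ℝ^N be differentiable with u̇(t) = f(u(t), t) and u(0) = u₀. Let 0 = t₀ < t₁ < … < t_M = T be a partition and let U : [0,T) → ℝ^N be a function that is continuously differentiable on each open subinterval (t_{j−1}, t_j), with finite one-sided limits U(t_{j−1}⁺) and U(t_j⁻) at the endpoints of each subinterval; set U(0⁻) := u₀ and U(T) := U(T⁻). Define the residual R(t) = U̇(t) − f(U(t), t) on the interior of each subinterval, the jumps [U]_{j−1} = U(t_{j−1}⁺) − U(t_{j−1}⁻) for j = 1, …, M, the error e = U − u, and the averaged Jacobian J(t) = ∫₀¹ D_u f(s·u(t) + (1−s)·U(t), t) ds. Suppose e(T) ≠ 0 and let φ : [0,T] → ℝ^N be differentiable with −φ̇(t) = J(t)ᵀ φ(t) and φ(T) = e(T)/‖e(T)‖. Then ‖e(T)‖ = Σ_{j=1}^{M} ⟨[U]_{j−1}, φ(t_{j−1})⟩ + Σ_{j=1}^{M} ∫_{t_{j−1}}^{t_j} ⟨R(t), φ(t)⟩ dt. -/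

import Mathlib

open MeasureTheory

private lemma meanValueCLM (N : ℕ)
    (f : EuclideanSpace ℝ (Fin N) → ℝ → EuclideanSpace ℝ (Fin N))
    (Df : EuclideanSpace ℝ (Fin N) → ℝ →
      (EuclideanSpace ℝ (Fin N) →L[ℝ] EuclideanSpace ℝ (Fin N)))
    (hDf : ∀ x t, HasFDerivAt (fun y => f y t) (Df x t) x)
    (hDf_cont : Continuous fun p : EuclideanSpace ℝ (Fin N) × ℝ => Df p.1 p.2)
    (s : ℝ) (a b : EuclideanSpace ℝ (Fin N)) :
    (∫ σ in (0:ℝ)..1, Df (σ • a + (1 - σ) • b) s) (a - b) = f a s - f b s := by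
  set γ : ℝ → EuclideanSpace ℝ (Fin N) := fun σ => σ • a + (1 - σ) • b with hγdef
  have hγ : ∀ σ : ℝ, HasDerivAt γ (a - b) σ := by
    intro σ
    have h1 : HasDerivAt (fun σ : ℝ => σ • a) ((1:ℝ) • a) σ :=
      (hasDerivAt_id σ).smul_const a
    have h2 : HasDerivAt (fun σ : ℝ => (1 - σ) • b) ((-1 : ℝ) • b) σ := by
      have : HasDerivAt (fun σ : ℝ => 1 - σ) (-1) σ :=
        ((hasDerivAt_id σ).const_sub 1)
      exact this.smul_const b
    have h3 := h1.add h2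
    simp only [one_smul, neg_one_smul, ← sub_eq_add_neg] at h3
    exact h3
  have hcontγ : Continuous γ := by continuity
  have hcontD : Continuous fun σ => Df (γ σ) s :=
    hDf_cont.comp (hcontγ.prodMk continuous_const)
  have hint : IntervalIntegrable (fun σ => Df (γ σ) s) volume 0 1 :=
    hcontD.intervalIntegrable 0 1
  have hftc : ∫ σ in (0:ℝ)..1, (Df (γ σ) s) (a - b) = f (γ 1) s - f (γ 0) s := by
    exact intervalIntegral.integral_eq_sub_of_hasDerivAt
      (f := fun σ => f (γ σ) s)
      (fun σ _ => (hDf (γ σ) s).comp_hasDerivAt σ (hγ σ))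
      ((hcontD.clm_apply continuous_const).intervalIntegrable 0 1)
  have happ : (∫ σ in (0:ℝ)..1, Df (γ σ) s) (a - b)
      = ∫ σ in (0:ℝ)..1, (Df (γ σ) s) (a - b) := by
    rw [intervalIntegral.integral_of_le (by norm_num : (0:ℝ) ≤ 1),
        intervalIntegral.integral_of_le (by norm_num : (0:ℝ) ≤ 1)]
    exact ContinuousLinearMap.integral_apply
      ((intervalIntegrable_iff_integrableOn_Ioc_of_le (by norm_num)).mp hint) (a - b)
  rw [happ, hftc]
  simp [hγdef]

private lemma innerIntInt (N : ℕ) (a b : ℝ) (hab : a ≤ b)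
    (R φ : ℝ → EuclideanSpace ℝ (Fin N))
    (hR : IntervalIntegrable R volume a b)
    (hφ : ContinuousOn φ (Set.Icc a b)) :
    IntervalIntegrable (fun s => (inner ℝ (R s) (φ s) : ℝ)) volume a b := by
  rw [intervalIntegrable_iff_integrableOn_Ioc_of_le hab] at hR ⊢
  obtain ⟨C, hC⟩ := (isCompact_Icc (a := a) (b := b)).exists_bound_of_continuousOn hφ
  have hφm : AEStronglyMeasurable φ (volume.restrict (Set.Ioc a b)) :=
    (hφ.mono Set.Ioc_subset_Icc_self).aestronglyMeasurable measurableSet_Ioc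
  refine Integrable.mono' (hR.norm.const_mul C) (hR.aestronglyMeasurable.inner hφm) ?_
  filter_upwards [ae_restrict_mem measurableSet_Ioc] with s hs
  calc ‖(inner ℝ (R s) (φ s) : ℝ)‖ ≤ ‖R s‖ * ‖φ s‖ := norm_inner_le_norm _ _
    _ = ‖φ s‖ * ‖R s‖ := by ring
    _ ≤ C * ‖R s‖ :=
        mul_le_mul_of_nonneg_right (hC s (Set.Ioc_subset_Icc_self hs)) (norm_nonneg _)

/-- A posteriori error representation for the discontinuous
Galerkin method: with `U` piecewise smooth on the partition
`0 = t₀ < … < t_M = T`, one-sided limits `U(t_j⁺) = Up j`, `U(t_j⁻) = Um j`,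
weak initial condition `U(0⁻) = u₀`, convention `U(T) = U(T⁻)`, residual
`R = U̇ − f(U,·)` on the interior of each subinterval, error `e = U − u`,
averaged Jacobian `J`, and dual solution `φ` with `−φ̇ = J*φ`,
`φ(T) = e(T)/‖e(T)‖`, one has
`‖e(T)‖ = Σ_j ([U]_{j−1}, φ(t_{j−1})) + Σ_j ∫_{I_j} (R, φ) dt`. -/
theorem stmt9 (N M : ℕ) (hM : 1 ≤ M) (T : ℝ) (hT : 0 < T)
    (f : EuclideanSpace ℝ (Fin N) → ℝ → EuclideanSpace ℝ (Fin N))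
    (hf_cont : Continuous fun p : EuclideanSpace ℝ (Fin N) × ℝ => f p.1 p.2)
    (Df : EuclideanSpace ℝ (Fin N) → ℝ →
      (EuclideanSpace ℝ (Fin N) →L[ℝ] EuclideanSpace ℝ (Fin N)))
    (hDf : ∀ x t, HasFDerivAt (fun y => f y t) (Df x t) x)
    (hDf_cont : Continuous fun p : EuclideanSpace ℝ (Fin N) × ℝ => Df p.1 p.2)
    (u₀ : EuclideanSpace ℝ (Fin N))
    (u : ℝ → EuclideanSpace ℝ (Fin N))
    (hu : ∀ s ∈ Set.Icc (0 : ℝ) T, HasDerivAt u (f (u s) s) s)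
    (hu0 : u 0 = u₀)
    (t : ℕ → ℝ) (ht0 : t 0 = 0) (htM : t M = T)
    (ht_mono : ∀ j < M, t j < t (j + 1))
    (U : ℝ → EuclideanSpace ℝ (Fin N))
    (hU_smooth : ∀ j < M, ContDiffOn ℝ 1 U (Set.Ioo (t j) (t (j + 1))))
    (Up Um : ℕ → EuclideanSpace ℝ (Fin N))
    (hUp : ∀ j < M,
      Filter.Tendsto U (nhdsWithin (t j) (Set.Ioi (t j))) (nhds (Up j)))
    (hUm : ∀ j, 1 ≤ j → j ≤ M →
      Filter.Tendsto U (nhdsWithin (t j) (Set.Iio (t j))) (nhds (Um j)))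
    (hUm0 : Um 0 = u₀)
    (hUT : U T = Um M)
    (R : ℝ → EuclideanSpace ℝ (Fin N))
    (hR : ∀ j < M, ∀ s ∈ Set.Ioo (t j) (t (j + 1)), R s = deriv U s - f (U s) s)
    (hR_int : ∀ j < M, IntervalIntegrable R volume (t j) (t (j + 1)))
    (e : ℝ → EuclideanSpace ℝ (Fin N)) (he : e = U - u)
    (J : ℝ → (EuclideanSpace ℝ (Fin N) →L[ℝ] EuclideanSpace ℝ (Fin N)))
    (hJ : ∀ s, J s = ∫ σ in (0 : ℝ)..1, Df (σ • u s + (1 - σ) • U s) s)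
    (heT : e T ≠ 0)
    (φ : ℝ → EuclideanSpace ℝ (Fin N))
    (hφ : ∀ s ∈ Set.Icc (0 : ℝ) T,
      HasDerivAt φ (-(ContinuousLinearMap.adjoint (J s) (φ s))) s)
    (hφT : φ T = ‖e T‖⁻¹ • e T) :
    ‖e T‖ = (∑ j ∈ Finset.range M, (inner ℝ (Up j - Um j) (φ (t j)) : ℝ)) +
      ∑ j ∈ Finset.range M, ∫ s in (t j)..(t (j + 1)), (inner ℝ (R s) (φ s) : ℝ) := by
  -- monotonicity of the partition
  have hmono : ∀ k, k ≤ M → ∀ j, j ≤ k → t j ≤ t k := by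
    intro k
    induction k with
    | zero => intro _ j hj; simp [Nat.le_zero.mp hj]
    | succ n ih =>
      intro hkM j hj
      rcases Nat.lt_succ_iff_lt_or_eq.mp (Nat.lt_succ_of_le hj) with h | h
      · exact le_trans (ih (by omega) j (by omega)) (le_of_lt (ht_mono n (by omega)))
      · rw [h]
  have ht0le : ∀ j, j ≤ M → 0 ≤ t j := by
    intro j hj; rw [← ht0]; exact hmono j hj 0 (Nat.zero_le _)
  have htleT : ∀ j, j ≤ M → t j ≤ T := by
    intro j hj; rw [← htM]; exact hmono M le_rfl j hj
  -- continuity of u and φ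
  have huc : ∀ s ∈ Set.Icc (0:ℝ) T, ContinuousAt u s := fun s hs => (hu s hs).continuousAt
  have hφc : ∀ s ∈ Set.Icc (0:ℝ) T, ContinuousAt φ s := fun s hs => (hφ s hs).continuousAt
  -- mean value identity for J
  have hJapp : ∀ s : ℝ, (J s) (U s - u s) = f (U s) s - f (u s) s := by
    intro s
    have h := meanValueCLM N f Df hDf hDf_cont s (u s) (U s)
    rw [hJ s]
    have hne : U s - u s = -(u s - U s) := (neg_sub _ _).symm
    rw [hne, map_neg, h, neg_sub]
  -- key per-interval identity
  have key : ∀ j < M, ∫ s in (t j)..(t (j + 1)), (inner ℝ (R s) (φ s) : ℝ)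
      = (inner ℝ (Um (j+1) - u (t (j+1))) (φ (t (j+1))) : ℝ)
        - (inner ℝ (Up j - u (t j)) (φ (t j)) : ℝ) := by
    intro j hj
    set a := t j
    set b := t (j + 1)
    have hab : a < b := ht_mono j hj
    have ha0 : (0:ℝ) ≤ a := ht0le j (le_of_lt hj)
    have hbT : b ≤ T := htleT (j+1) hj
    have hsub : Set.Icc a b ⊆ Set.Icc 0 T := Set.Icc_subset_Icc ha0 hbT
    have haIcc : a ∈ Set.Icc (0:ℝ) T := ⟨ha0, le_trans (le_of_lt hab) hbT⟩
    have hbIcc : b ∈ Set.Icc (0:ℝ) T := ⟨le_trans ha0 (le_of_lt hab), hbT⟩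
    have hderiv : ∀ s ∈ Set.Ioo a b,
        HasDerivAt (fun s => (inner ℝ (U s - u s) (φ s) : ℝ)) ((inner ℝ (R s) (φ s) : ℝ)) s := by
      intro s hs
      have hsIcc : s ∈ Set.Icc (0:ℝ) T :=
        ⟨le_trans ha0 (le_of_lt hs.1), le_trans (le_of_lt hs.2) hbT⟩
      have hUd : HasDerivAt U (deriv U s) s :=
        (((hU_smooth j hj).differentiableOn one_ne_zero).differentiableAt
          (isOpen_Ioo.mem_nhds hs)).hasDerivAt
      have hed : HasDerivAt (fun s => U s - u s) (deriv U s - f (u s) s) s :=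
        hUd.sub (hu s hsIcc)
      have hgd := hed.inner ℝ (hφ s hsIcc)
      have hval : (inner ℝ (U s - u s) (-(ContinuousLinearMap.adjoint (J s) (φ s))) : ℝ)
          + (inner ℝ (deriv U s - f (u s) s) (φ s) : ℝ) = (inner ℝ (R s) (φ s) : ℝ) := by
        have h1 : deriv U s = R s + f (U s) s := by rw [hR j hj s hs]; abel
        rw [h1, inner_neg_right, ContinuousLinearMap.adjoint_inner_right, hJapp s]
        simp only [inner_sub_left, inner_add_left]
        ring
      rw [← hval]
      exact hgd
    have hint : IntervalIntegrable (fun s => (inner ℝ (R s) (φ s) : ℝ)) volume a b :=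
      innerIntInt N a b (le_of_lt hab) R φ (hR_int j hj)
        (fun s hs => (hφc s (hsub hs)).continuousWithinAt)
    have hla : Filter.Tendsto (fun s => (inner ℝ (U s - u s) (φ s) : ℝ))
        (nhdsWithin a (Set.Ioi a)) (nhds ((inner ℝ (Up j - u a) (φ a) : ℝ))) :=
      Filter.Tendsto.inner
        ((hUp j hj).sub (((huc a haIcc).tendsto).mono_left nhdsWithin_le_nhds))
        (((hφc a haIcc).tendsto).mono_left nhdsWithin_le_nhds)
    have hlb : Filter.Tendsto (fun s => (inner ℝ (U s - u s) (φ s) : ℝ))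
        (nhdsWithin b (Set.Iio b)) (nhds ((inner ℝ (Um (j+1) - u b) (φ b) : ℝ))) :=
      Filter.Tendsto.inner
        ((hUm (j+1) (by omega) hj).sub
          (((huc b hbIcc).tendsto).mono_left nhdsWithin_le_nhds))
        (((hφc b hbIcc).tendsto).mono_left nhdsWithin_le_nhds)
    exact intervalIntegral.integral_eq_sub_of_hasDerivAt_of_tendsto hab hderiv hint hla hlb
  -- telescoping
  set F : ℕ → ℝ := fun j => (inner ℝ (Up j - u (t j)) (φ (t j)) : ℝ) with hF
  set G : ℕ → ℝ := fun j => (inner ℝ (Um j - u (t j)) (φ (t j)) : ℝ) with hG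
  have hjump : ∀ j, (inner ℝ (Up j - Um j) (φ (t j)) : ℝ) = F j - G j := by
    intro j
    rw [hF, hG]
    simp only [← inner_sub_left]
    congr 1
    abel
  have hsum : (∑ j ∈ Finset.range M, (inner ℝ (Up j - Um j) (φ (t j)) : ℝ)) +
      ∑ j ∈ Finset.range M, ∫ s in (t j)..(t (j + 1)), (inner ℝ (R s) (φ s) : ℝ)
      = G M - G 0 := by
    rw [← Finset.sum_add_distrib, ← Finset.sum_range_sub G]
    apply Finset.sum_congr rfl
    intro j hj
    rw [Finset.mem_range] at hj
    rw [key j hj, hjump j]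
    show F j - G j + (G (j+1) - F j) = G (j+1) - G j
    ring
  have heTval : e T = Um M - u T := by rw [he, ← hUT]; rfl
  have hGM : G M = ‖e T‖ := by
    rw [hG]
    simp only [htM, ← heTval, hφT]
    rw [real_inner_smul_right, real_inner_self_eq_norm_mul_norm]
    have h0 : ‖e T‖ ≠ 0 := norm_ne_zero_iff.mpr heT
    field_simp
  have hG0 : G 0 = 0 := by
    rw [hG]
    simp [ht0, hUm0, hu0]
  rw [hsum, hGM, hG0, sub_zero]
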